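/- Let d ≥ 2 and let F be the swap operator on ℂ^d ⊗ ℂ^d, with symmetric and antisymmetric projectors Π_sym = (I + F)/2 and Π_anti = (I − F)/2. Then for every d²×d² complex matrix ρ, the twirl ∫ (U ⊗ U) ρ (U ⊗ U)† dU over the Haar probability measure on the unitary group U(d) equals Tr(ρ Π_sym) · (2/(d(d+1))) Π_sym + Tr(ρ Π_anti) · (2/(d(d−1))) Π_anti. -/

import Mathlib

open scoped Kronecker Matrix
open MeasureTheory

noncomputable instance {n : Type*} [Fintype n] : MeasurableSpace (Matrix n n ℂ) :=
  MeasurableSpace.pi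

/-- The swap operator `F` on `ℂ^d ⊗ ℂ^d`: `F(x ⊗ y) = y ⊗ x`. -/
def swapOp (d : ℕ) : Matrix (Fin d × Fin d) (Fin d × Fin d) ℂ :=
  Matrix.of fun p q => if q.1 = p.2 ∧ q.2 = p.1 then 1 else 0

/-- The projector onto the symmetric subspace, `Π_sym = (I + F)/2`. -/
noncomputable def PiSym (d : ℕ) : Matrix (Fin d × Fin d) (Fin d × Fin d) ℂ :=
  (2 : ℂ)⁻¹ • (1 + swapOp d)

/-- The projector onto the antisymmetric subspace, `Π_anti = (I − F)/2`. -/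
noncomputable def PiAnti (d : ℕ) : Matrix (Fin d × Fin d) (Fin d × Fin d) ℂ :=
  (2 : ℂ)⁻¹ • (1 - swapOp d)

section Helpers

variable {d : ℕ}

abbrev uG (d : ℕ) := Matrix.unitaryGroup (Fin d) ℂ

/-! ### Swap operator basics -/

lemma kron_conjT (A B : Matrix (Fin d) (Fin d) ℂ) : (A ⊗ₖ B)ᴴ = Aᴴ ⊗ₖ Bᴴ := by
  ext p q
  simp [Matrix.conjTranspose_apply, Matrix.kroneckerMap_apply, star_mul']

lemma swapOp_mul_apply (X : Matrix (Fin d × Fin d) (Fin d × Fin d) ℂ) (p q) :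
    (swapOp d * X) p q = X (p.2, p.1) q := by
  rw [Matrix.mul_apply, Fintype.sum_prod_type]
  simp [swapOp, ite_and]

lemma mul_swapOp_apply (X : Matrix (Fin d × Fin d) (Fin d × Fin d) ℂ) (p q) :
    (X * swapOp d) p q = X p (q.2, q.1) := by
  rw [Matrix.mul_apply, Fintype.sum_prod_type]
  simp [swapOp, ite_and, eq_comm]

lemma swapOp_mul_kron (A B : Matrix (Fin d) (Fin d) ℂ) :
    swapOp d * (A ⊗ₖ B) = (B ⊗ₖ A) * swapOp d := by
  ext p q
  rw [swapOp_mul_apply, mul_swapOp_apply]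
  simp [Matrix.kroneckerMap_apply, mul_comm]

lemma swapOp_mul_swapOp : swapOp d * swapOp d = 1 := by
  ext p q
  rw [swapOp_mul_apply]
  simp [swapOp, Matrix.one_apply, Prod.ext_iff, eq_comm, and_comm]

lemma trace_swapOp : (swapOp d).trace = d := by
  rw [Matrix.trace, Fintype.sum_prod_type]
  simp [Matrix.diag, swapOp, and_comm, eq_comm]

/-! ### Measurability and integrability -/

lemma measurable_matrix_entry {n : Type*} [Fintype n] (i j : n) :
    Measurable (fun M : Matrix n n ℂ => M i j) :=
  (measurable_pi_apply j).comp (measurable_pi_apply i)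

lemma measurable_uG_entry (i j : Fin d) :
    Measurable (fun U : uG d => (U : Matrix (Fin d) (Fin d) ℂ) i j) :=
  (measurable_matrix_entry i j).comp measurable_subtype_coe

lemma uG_entry_norm_le (U : uG d) (i j : Fin d) :
    ‖(U : Matrix (Fin d) (Fin d) ℂ) i j‖ ≤ 1 := by
  have h : (star (U : Matrix (Fin d) (Fin d) ℂ) * U) j j = (1 : Matrix (Fin d) (Fin d) ℂ) j j := by
    rw [(Unitary.mem_iff.mp U.prop).1]
  rw [Matrix.mul_apply, Matrix.one_apply_eq] at h
  have h2 : ∀ k, (star (U : Matrix (Fin d) (Fin d) ℂ)) j k * (U : Matrix (Fin d) (Fin d) ℂ) k j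
      = (Complex.normSq ((U : Matrix (Fin d) (Fin d) ℂ) k j) : ℂ) := by
    intro k
    rw [Matrix.star_apply, Complex.star_def, ← Complex.normSq_eq_conj_mul_self]
  rw [Finset.sum_congr rfl (fun k _ => h2 k)] at h
  have h3 : ∑ k, Complex.normSq ((U : Matrix (Fin d) (Fin d) ℂ) k j) = 1 := by
    have := congrArg Complex.re h
    simpa using this
  have h4 : Complex.normSq ((U : Matrix (Fin d) (Fin d) ℂ) i j) ≤ 1 := by
    rw [← h3]
    exact Finset.single_le_sum
      (f := fun k => Complex.normSq ((U : Matrix (Fin d) (Fin d) ℂ) k j))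
      (fun k _ => Complex.normSq_nonneg _) (Finset.mem_univ i)
  rw [← Complex.sq_norm ((U : Matrix (Fin d) (Fin d) ℂ) i j)] at h4
  have h5 := norm_nonneg ((U : Matrix (Fin d) (Fin d) ℂ) i j)
  have : ‖(U : Matrix (Fin d) (Fin d) ℂ) i j‖ ≤ 1 := by nlinarith
  simpa using this

lemma kron_entry_norm_le (U : uG d) (p r : Fin d × Fin d) :
    ‖((U : Matrix (Fin d) (Fin d) ℂ) ⊗ₖ (U : Matrix (Fin d) (Fin d) ℂ)) p r‖ ≤ 1 := by
  rw [Matrix.kroneckerMap_apply, norm_mul]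
  exact mul_le_one₀ (uG_entry_norm_le U _ _) (norm_nonneg _) (uG_entry_norm_le U _ _)

/-- The integrand of the twirl. -/
noncomputable def twirlFn (ρ : Matrix (Fin d × Fin d) (Fin d × Fin d) ℂ) (U : uG d) :
    Matrix (Fin d × Fin d) (Fin d × Fin d) ℂ :=
  ((U : Matrix (Fin d) (Fin d) ℂ) ⊗ₖ (U : Matrix (Fin d) (Fin d) ℂ)) * ρ *
    ((U : Matrix (Fin d) (Fin d) ℂ) ⊗ₖ (U : Matrix (Fin d) (Fin d) ℂ))ᴴ

lemma twirlFn_meas (ρ : Matrix (Fin d × Fin d) (Fin d × Fin d) ℂ) (p q : Fin d × Fin d) :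
    Measurable (fun U : uG d => twirlFn ρ U p q) := by
  simp only [twirlFn, Matrix.mul_apply, Matrix.conjTranspose_apply, Matrix.kroneckerMap_apply]
  apply Finset.measurable_sum
  intro s _
  apply Measurable.mul
  · apply Finset.measurable_sum
    intro r _
    exact ((measurable_uG_entry _ _).mul (measurable_uG_entry _ _)).mul measurable_const
  · exact continuous_star.measurable.comp
      ((measurable_uG_entry q.1 s.1).mul (measurable_uG_entry q.2 s.2))

lemma twirlFn_norm_le (ρ : Matrix (Fin d × Fin d) (Fin d × Fin d) ℂ) (U : uG d)
    (p q : Fin d × Fin d) :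
    ‖twirlFn ρ U p q‖ ≤ ∑ s : Fin d × Fin d, ∑ r : Fin d × Fin d, ‖ρ r s‖ := by
  simp only [twirlFn, Matrix.mul_apply, Matrix.conjTranspose_apply, Matrix.kroneckerMap_apply]
  refine (norm_sum_le _ _).trans (Finset.sum_le_sum fun s _ => ?_)
  rw [norm_mul, norm_star]
  calc ‖∑ r, ((U : Matrix (Fin d) (Fin d) ℂ) p.1 r.1 * (U : Matrix (Fin d) (Fin d) ℂ) p.2 r.2) * ρ r s‖
        * ‖(U : Matrix (Fin d) (Fin d) ℂ) q.1 s.1 * (U : Matrix (Fin d) (Fin d) ℂ) q.2 s.2‖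
      ≤ (∑ r, ‖ρ r s‖) * 1 := by
        refine mul_le_mul ?_ (kron_entry_norm_le U q s) (norm_nonneg _)
          (Finset.sum_nonneg fun r _ => norm_nonneg _)
        refine (norm_sum_le _ _).trans (Finset.sum_le_sum fun r _ => ?_)
        rw [norm_mul]
        exact mul_le_of_le_one_left (norm_nonneg _) (kron_entry_norm_le U p r)
    _ = ∑ r, ‖ρ r s‖ := mul_one _

lemma twirlFn_integrable (μ : Measure (uG d)) [IsProbabilityMeasure μ]
    (ρ : Matrix (Fin d × Fin d) (Fin d × Fin d) ℂ) (p q : Fin d × Fin d) :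
    Integrable (fun U : uG d => twirlFn ρ U p q) μ := by
  refine (integrable_const (∑ s : Fin d × Fin d, ∑ r : Fin d × Fin d, ‖ρ r s‖)).mono'
    ((twirlFn_meas ρ p q).aestronglyMeasurable) ?_
  exact Filter.Eventually.of_forall fun U => twirlFn_norm_le ρ U p q

/-! ### Matrix-valued integrals -/

noncomputable def intM (μ : Measure (uG d))
    (f : uG d → Matrix (Fin d × Fin d) (Fin d × Fin d) ℂ) :
    Matrix (Fin d × Fin d) (Fin d × Fin d) ℂ :=
  Matrix.of fun p q => ∫ U, f U p q ∂μ

lemma mul_intM_mul (μ : Measure (uG d)) (A B : Matrix (Fin d × Fin d) (Fin d × Fin d) ℂ)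
    (f : uG d → Matrix (Fin d × Fin d) (Fin d × Fin d) ℂ)
    (hf : ∀ p q, Integrable (fun U => f U p q) μ) :
    A * intM μ f * B = intM μ (fun U => A * f U * B) := by
  ext p q
  simp only [intM, Matrix.mul_apply, Matrix.of_apply]
  have h1 : ∀ j, Integrable (fun U => (∑ k, A p k * f U k j) * B j q) μ := fun j =>
    (integrable_finset_sum _ fun k _ => (hf k j).const_mul _).mul_const _
  rw [integral_finset_sum _ fun j _ => h1 j]
  refine Finset.sum_congr rfl fun j _ => ?_
  rw [integral_mul_const, integral_finset_sum _ fun k _ => (hf k j).const_mul _]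
  congr 1
  exact Finset.sum_congr rfl fun k _ => (integral_const_mul _ _).symm

lemma trace_intM (μ : Measure (uG d)) (f : uG d → Matrix (Fin d × Fin d) (Fin d × Fin d) ℂ)
    (hf : ∀ p q, Integrable (fun U => f U p q) μ) :
    (intM μ f).trace = ∫ U, (f U).trace ∂μ := by
  simp only [Matrix.trace, Matrix.diag, intM, Matrix.of_apply]
  rw [integral_finset_sum _ fun p _ => hf p p]

lemma measurable_mulLeft (V : uG d) : Measurable fun W : uG d => V * W := by
  refine Measurable.subtype_mk ?_
  show Measurable fun W : uG d => (V : Matrix (Fin d) (Fin d) ℂ) * (W : Matrix (Fin d) (Fin d) ℂ)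
  refine measurable_pi_lambda _ fun i => measurable_pi_lambda _ fun j => ?_
  show Measurable fun W : uG d => ∑ k, (V : Matrix (Fin d) (Fin d) ℂ) i k *
    (W : Matrix (Fin d) (Fin d) ℂ) k j
  exact Finset.measurable_sum _ fun k _ => (measurable_uG_entry k j).const_mul _

noncomputable def mulLeftMEquiv (V : uG d) : uG d ≃ᵐ uG d where
  toEquiv := Equiv.mulLeft V
  measurable_toFun := measurable_mulLeft V
  measurable_invFun := measurable_mulLeft V⁻¹

lemma integral_mulLeft (μ : Measure (uG d))
    (hinv : ∀ V : uG d, MeasurePreserving (fun W => V * W) μ μ) (V : uG d) (g : uG d → ℂ) :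
    ∫ W, g (V * W) ∂μ = ∫ W, g W ∂μ :=
  (hinv V).integral_comp (mulLeftMEquiv V).measurableEmbedding g

/-! ### Invariance of the twirl -/

lemma kron_conjT_mul_self (V : uG d) :
    ((V : Matrix (Fin d) (Fin d) ℂ) ⊗ₖ (V : Matrix (Fin d) (Fin d) ℂ))ᴴ *
      ((V : Matrix (Fin d) (Fin d) ℂ) ⊗ₖ (V : Matrix (Fin d) (Fin d) ℂ)) = 1 := by
  rw [kron_conjT, ← Matrix.mul_kronecker_mul, ← Matrix.star_eq_conjTranspose,
    (Unitary.mem_iff.mp V.prop).1]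
  simp

lemma twirl_inv (μ : Measure (uG d)) [IsProbabilityMeasure μ]
    (hinv : ∀ V : uG d, MeasurePreserving (fun W => V * W) μ μ)
    (ρ : Matrix (Fin d × Fin d) (Fin d × Fin d) ℂ) (V : uG d) :
    ((V : Matrix (Fin d) (Fin d) ℂ) ⊗ₖ (V : Matrix (Fin d) (Fin d) ℂ)) * intM μ (twirlFn ρ) *
      ((V : Matrix (Fin d) (Fin d) ℂ) ⊗ₖ (V : Matrix (Fin d) (Fin d) ℂ))ᴴ
      = intM μ (twirlFn ρ) := by
  rw [mul_intM_mul μ _ _ _ (twirlFn_integrable μ ρ)]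
  have key : ∀ U : uG d,
      ((V : Matrix (Fin d) (Fin d) ℂ) ⊗ₖ (V : Matrix (Fin d) (Fin d) ℂ)) * twirlFn ρ U *
        ((V : Matrix (Fin d) (Fin d) ℂ) ⊗ₖ (V : Matrix (Fin d) (Fin d) ℂ))ᴴ
        = twirlFn ρ (V * U) := by
    intro U
    simp only [twirlFn]
    have hco : ((V * U : uG d) : Matrix (Fin d) (Fin d) ℂ)
        = (V : Matrix (Fin d) (Fin d) ℂ) * (U : Matrix (Fin d) (Fin d) ℂ) := rfl
    rw [hco, Matrix.mul_kronecker_mul, Matrix.conjTranspose_mul]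
    simp only [mul_assoc]
  ext p q
  show (∫ U, (((V : Matrix (Fin d) (Fin d) ℂ) ⊗ₖ (V : Matrix (Fin d) (Fin d) ℂ)) * twirlFn ρ U *
      ((V : Matrix (Fin d) (Fin d) ℂ) ⊗ₖ (V : Matrix (Fin d) (Fin d) ℂ))ᴴ) p q ∂μ)
    = ∫ U, twirlFn ρ U p q ∂μ
  calc (∫ U, (((V : Matrix (Fin d) (Fin d) ℂ) ⊗ₖ (V : Matrix (Fin d) (Fin d) ℂ)) * twirlFn ρ U *
          ((V : Matrix (Fin d) (Fin d) ℂ) ⊗ₖ (V : Matrix (Fin d) (Fin d) ℂ))ᴴ) p q ∂μ)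
      = ∫ U, twirlFn ρ (V * U) p q ∂μ := by
        refine integral_congr_ae (Filter.Eventually.of_forall fun U => ?_)
        exact congrArg (fun M => M p q) (key U)
    _ = ∫ U, twirlFn ρ U p q ∂μ := integral_mulLeft μ hinv V fun W => twirlFn ρ W p q

lemma twirl_comm (μ : Measure (uG d)) [IsProbabilityMeasure μ]
    (hinv : ∀ V : uG d, MeasurePreserving (fun W => V * W) μ μ)
    (ρ : Matrix (Fin d × Fin d) (Fin d × Fin d) ℂ) (V : uG d) :
    intM μ (twirlFn ρ) * ((V : Matrix (Fin d) (Fin d) ℂ) ⊗ₖ (V : Matrix (Fin d) (Fin d) ℂ))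
      = ((V : Matrix (Fin d) (Fin d) ℂ) ⊗ₖ (V : Matrix (Fin d) (Fin d) ℂ)) * intM μ (twirlFn ρ) := by
  conv_lhs => rw [← twirl_inv μ hinv ρ V]
  rw [mul_assoc, kron_conjT_mul_self V, mul_one]


/-! ### Structure of the commutant -/

variable {M : Matrix (Fin d × Fin d) (Fin d × Fin d) ℂ}

lemma diag_unitary (t : Fin d → ℂ) (ht : ∀ i, star (t i) * t i = 1) :
    Matrix.diagonal t ∈ Matrix.unitaryGroup (Fin d) ℂ := by
  refine Unitary.mem_iff.mpr ⟨?_, ?_⟩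
  · rw [Matrix.star_eq_conjTranspose, Matrix.diagonal_conjTranspose, Matrix.diagonal_mul_diagonal]
    simp only [Pi.star_apply, ht, Matrix.diagonal_one]
  · rw [Matrix.star_eq_conjTranspose, Matrix.diagonal_conjTranspose, Matrix.diagonal_mul_diagonal]
    have ht' : ∀ i, t i * star (t i) = 1 := fun i => by rw [mul_comm]; exact ht i
    simp only [Pi.star_apply, ht', Matrix.diagonal_one]

lemma phase_rel (hM : ∀ V : uG d, M * ((V : Matrix (Fin d) (Fin d) ℂ) ⊗ₖ (V : Matrix (Fin d) (Fin d) ℂ))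
      = ((V : Matrix (Fin d) (Fin d) ℂ) ⊗ₖ (V : Matrix (Fin d) (Fin d) ℂ)) * M)
    (t : Fin d → ℂ) (ht : ∀ i, star (t i) * t i = 1) (p q : Fin d × Fin d) :
    M p q * (t q.1 * t q.2) = (t p.1 * t p.2) * M p q := by
  have h := congrArg (fun X => X p q) (hM ⟨Matrix.diagonal t, diag_unitary t ht⟩)
  simp only [Matrix.mul_apply, Matrix.kroneckerMap_apply, Matrix.diagonal_apply] at h
  rw [Fintype.sum_prod_type, Fintype.sum_prod_type] at h
  simp only [mul_ite, mul_zero, ite_mul, zero_mul, Finset.sum_ite_eq, Finset.sum_ite_eq',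
    Finset.mem_univ, if_true] at h
  convert h using 1 <;> ring

/-- Permutation matrix. -/
def permM (σ : Equiv.Perm (Fin d)) : Matrix (Fin d) (Fin d) ℂ :=
  Matrix.of fun i j => if i = σ j then 1 else 0

lemma perm_unitary (σ : Equiv.Perm (Fin d)) : permM σ ∈ Matrix.unitaryGroup (Fin d) ℂ := by
  refine Unitary.mem_iff.mpr ⟨?_, ?_⟩
  · ext i j
    rw [Matrix.mul_apply]
    simp [permM, Matrix.star_apply, Matrix.one_apply, ite_and, σ.injective.eq_iff, eq_comm]
  · ext i j
    rw [Matrix.mul_apply]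
    simp only [permM, Matrix.star_apply, Matrix.of_apply, Matrix.one_apply, apply_ite star,
      star_one, star_zero]
    rw [Equiv.sum_comp σ (fun y => (if i = y then (1:ℂ) else 0) * (if j = y then 1 else 0))]
    simp [ite_and, Finset.sum_ite_eq, eq_comm]

lemma perm_rel (hM : ∀ V : uG d, M * ((V : Matrix (Fin d) (Fin d) ℂ) ⊗ₖ (V : Matrix (Fin d) (Fin d) ℂ))
      = ((V : Matrix (Fin d) (Fin d) ℂ) ⊗ₖ (V : Matrix (Fin d) (Fin d) ℂ)) * M)
    (σ : Equiv.Perm (Fin d)) (p q : Fin d × Fin d) :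
    M (σ p.1, σ p.2) (σ q.1, σ q.2) = M p q := by
  have h := congrArg (fun X => X (σ p.1, σ p.2) q) (hM ⟨permM σ, perm_unitary σ⟩)
  simp only [Matrix.mul_apply, Matrix.kroneckerMap_apply, permM, Matrix.of_apply] at h
  rw [Fintype.sum_prod_type, Fintype.sum_prod_type] at h
  simp only [mul_ite, mul_zero, mul_one, ite_mul, zero_mul, one_mul, Finset.sum_ite_eq,
    Finset.sum_ite_eq', Finset.mem_univ, if_true, σ.injective.eq_iff] at h
  simpa using h

lemma pair_count {α : Type*} [DecidableEq α] (p1 p2 q1 q2 : α)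
    (h1 : ¬(q1 = p1 ∧ q2 = p2)) (h2 : ¬(q1 = p2 ∧ q2 = p1)) :
    ∃ x, ((if p1 = x then 1 else 0) + (if p2 = x then 1 else 0) : ℕ)
      ≠ (if q1 = x then 1 else 0) + (if q2 = x then 1 else 0) := by
  by_contra hc
  push_neg at hc
  have e1 := hc p1
  have e2 := hc p2
  have e3 := hc q1
  have e4 := hc q2
  by_cases a1 : q1 = p1 <;> by_cases a2 : q2 = p2 <;> by_cases a3 : q1 = p2 <;>
    by_cases a4 : q2 = p1 <;> simp_all <;> omega

lemma I_pow_ne (m n : ℕ) (hm : m ≤ 2) (hn : n ≤ 2) (hmn : m ≠ n) :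
    (Complex.I : ℂ) ^ m ≠ Complex.I ^ n := by
  interval_cases m <;> interval_cases n <;> simp_all [pow_succ, Complex.ext_iff] <;> norm_num

lemma comm_zero (hM : ∀ V : uG d, M * ((V : Matrix (Fin d) (Fin d) ℂ) ⊗ₖ (V : Matrix (Fin d) (Fin d) ℂ))
      = ((V : Matrix (Fin d) (Fin d) ℂ) ⊗ₖ (V : Matrix (Fin d) (Fin d) ℂ)) * M)
    (p q : Fin d × Fin d) (h1 : ¬(q.1 = p.1 ∧ q.2 = p.2)) (h2 : ¬(q.1 = p.2 ∧ q.2 = p.1)) :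
    M p q = 0 := by
  obtain ⟨x, hx⟩ := pair_count p.1 p.2 q.1 q.2 h1 h2
  set t : Fin d → ℂ := fun i => if i = x then Complex.I else 1 with ht_def
  have ht : ∀ i, star (t i) * t i = 1 := by
    intro i
    by_cases h : i = x <;> simp [ht_def, h, Complex.star_def, Complex.conj_I, Complex.I_mul_I]
  have key := phase_rel hM t ht p q
  have tval : ∀ a b : Fin d, t a * t b
      = Complex.I ^ ((if a = x then 1 else 0) + (if b = x then 1 else 0) : ℕ) := by
    intro a b
    by_cases ha : a = x <;> by_cases hb : b = x <;> simp [ht_def, ha, hb, pow_succ]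
  rw [tval, tval] at key
  by_contra h0
  have hcancel : Complex.I ^ ((if q.1 = x then 1 else 0) + (if q.2 = x then 1 else 0) : ℕ)
      = Complex.I ^ ((if p.1 = x then 1 else 0) + (if p.2 = x then 1 else 0) : ℕ) :=
    mul_left_cancel₀ h0 (by rw [key]; ring)
  refine I_pow_ne _ _ ?_ ?_ (fun h => hx ?_) hcancel.symm <;>
    first
      | (split_ifs <;> omega)
      | (rw [h])

lemma exists_perm {α : Type*} [DecidableEq α] [Fintype α] (a b c e : α)
    (hab : a ≠ b) (hce : c ≠ e) : ∃ σ : Equiv.Perm α, σ a = c ∧ σ b = e := by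
  refine ⟨(Equiv.swap a c).trans (Equiv.swap (Equiv.swap a c b) e), ?_, ?_⟩
  · have hb' : Equiv.swap a c b ≠ c := by
      intro h
      exact hab ((Equiv.swap a c).injective (h.trans (Equiv.swap_apply_left a c).symm)).symm
    show Equiv.swap (Equiv.swap a c b) e (Equiv.swap a c a) = c
    rw [Equiv.swap_apply_left]
    exact Equiv.swap_apply_of_ne_of_ne (Ne.symm hb') hce
  · show Equiv.swap (Equiv.swap a c b) e (Equiv.swap a c b) = e
    exact Equiv.swap_apply_left _ _

/-- A real rotation by the 3-4-5 angle in the plane spanned by coordinates `i0, i1`. -/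
noncomputable def rotM (i0 i1 : Fin d) : Matrix (Fin d) (Fin d) ℂ :=
  Matrix.of fun i j =>
    if i = i0 ∧ j = i0 then 3/5 else if i = i0 ∧ j = i1 then 4/5
    else if i = i1 ∧ j = i0 then -(4/5) else if i = i1 ∧ j = i1 then 3/5
    else if i = j then 1 else 0

lemma sum_eq_pair {α : Type*} [Fintype α] [DecidableEq α] (a b : α) (hab : a ≠ b) (f : α → ℂ)
    (h : ∀ k, k ≠ a → k ≠ b → f k = 0) : ∑ k, f k = f a + f b := by
  rw [← Finset.sum_subset (Finset.subset_univ ({a, b} : Finset α))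
    (fun k _ hk => by
      simp only [Finset.mem_insert, Finset.mem_singleton, not_or] at hk
      exact h k hk.1 hk.2)]
  exact Finset.sum_pair hab

lemma rot_star (i0 i1 : Fin d) (i j : Fin d) : star (rotM i0 i1 i j) = rotM i0 i1 i j := by
  unfold rotM
  simp only [Matrix.of_apply]
  split_ifs <;> norm_num

lemma rot_conjT_mul (i0 i1 : Fin d) (h01 : i0 ≠ i1) : (rotM i0 i1)ᴴ * rotM i0 i1 = 1 := by
  have h10 := Ne.symm h01
  ext i j
  rw [Matrix.mul_apply]
  simp only [Matrix.conjTranspose_apply, rot_star]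
  by_cases hi0 : i = i0
  · by_cases hj0 : j = i0
    · rw [sum_eq_pair i0 i1 h01 _ (fun k hk0 hk1 => by simp [rotM, hk0, hk1, hi0, hj0])]
      simp [rotM, h01, h10, hi0, hj0, Matrix.one_apply]
      norm_num
    · by_cases hj1 : j = i1
      · rw [sum_eq_pair i0 i1 h01 _ (fun k hk0 hk1 => by simp [rotM, hk0, hk1, hi0, hj1])]
        simp [rotM, h01, h10, hi0, hj1, Matrix.one_apply]
        norm_num
      · have hrow : ∀ k, rotM i0 i1 k j = if k = j then 1 else 0 := fun k => by
          simp [rotM, hj0, hj1]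
        simp only [hrow, mul_ite, mul_one, mul_zero]
        rw [Finset.sum_ite_eq' Finset.univ j (fun k => rotM i0 i1 k i)]
        simp [rotM, hj0, hj1, hi0, Matrix.one_apply, Ne.symm hj0, Ne.symm hj1]
  · by_cases hi1 : i = i1
    · by_cases hj0 : j = i0
      · rw [sum_eq_pair i0 i1 h01 _ (fun k hk0 hk1 => by simp [rotM, hk0, hk1, hi1, hj0])]
        simp [rotM, h01, h10, hi1, hj0, Matrix.one_apply]
        norm_num
      · by_cases hj1 : j = i1
        · rw [sum_eq_pair i0 i1 h01 _ (fun k hk0 hk1 => by simp [rotM, hk0, hk1, hi1, hj1])]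
          simp [rotM, h01, h10, hi1, hj1, Matrix.one_apply]
          norm_num
        · have hrow : ∀ k, rotM i0 i1 k j = if k = j then 1 else 0 := fun k => by
            simp [rotM, hj0, hj1]
          simp only [hrow, mul_ite, mul_one, mul_zero]
          rw [Finset.sum_ite_eq' Finset.univ j (fun k => rotM i0 i1 k i)]
          simp [rotM, hj0, hj1, hi1, Matrix.one_apply, Ne.symm hj0, Ne.symm hj1]
    · have hcol : ∀ k, rotM i0 i1 k i = if k = i then 1 else 0 := fun k => by
        simp [rotM, hi0, hi1]
      simp only [hcol, ite_mul, one_mul, zero_mul]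
      rw [Finset.sum_ite_eq' Finset.univ i (fun k => rotM i0 i1 k j)]
      simp [rotM, hi0, hi1, Matrix.one_apply]

lemma rot_unitary (i0 i1 : Fin d) (h01 : i0 ≠ i1) : rotM i0 i1 ∈ Matrix.unitaryGroup (Fin d) ℂ := by
  have h := rot_conjT_mul i0 i1 h01
  refine Unitary.mem_iff.mpr ⟨?_, ?_⟩
  · rw [Matrix.star_eq_conjTranspose]
    exact h
  rw [Matrix.star_eq_conjTranspose]
  exact mul_eq_one_comm.mpr h

lemma comm_structure (i0 i1 : Fin d) (h01 : i0 ≠ i1)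
    (hM : ∀ V : uG d, M * ((V : Matrix (Fin d) (Fin d) ℂ) ⊗ₖ (V : Matrix (Fin d) (Fin d) ℂ))
      = ((V : Matrix (Fin d) (Fin d) ℂ) ⊗ₖ (V : Matrix (Fin d) (Fin d) ℂ)) * M) :
    M = M (i0, i1) (i0, i1) • 1 + M (i0, i1) (i1, i0) • swapOp d := by
  have h10 := Ne.symm h01
  -- invariance under permutations
  have ha : ∀ i j : Fin d, i ≠ j → M (i, j) (i, j) = M (i0, i1) (i0, i1) := by
    intro i j hij
    obtain ⟨σ, hσ0, hσ1⟩ := exists_perm i0 i1 i j h01 hij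
    have := perm_rel hM σ (i0, i1) (i0, i1)
    rwa [hσ0, hσ1] at this
  have hb : ∀ i j : Fin d, i ≠ j → M (i, j) (j, i) = M (i0, i1) (i1, i0) := by
    intro i j hij
    obtain ⟨σ, hσ0, hσ1⟩ := exists_perm i0 i1 i j h01 hij
    have := perm_rel hM σ (i0, i1) (i1, i0)
    rwa [hσ0, hσ1] at this
  have hc : ∀ i : Fin d, M (i, i) (i, i) = M (i0, i0) (i0, i0) := by
    intro i
    have := perm_rel hM (Equiv.swap i0 i) (i0, i0) (i0, i0)
    rwa [Equiv.swap_apply_left] at this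
  -- the rotation relation: M (i0,i0) (i0,i0) = a + b
  have hrot := congrArg (fun X => X ((i0, i0) : Fin d × Fin d) ((i0, i1) : Fin d × Fin d))
    (hM ⟨rotM i0 i1, rot_unitary i0 i1 h01⟩)
  simp only [Matrix.mul_apply, Matrix.kroneckerMap_apply] at hrot
  have hL : ∑ r : Fin d × Fin d, M (i0, i0) r * (rotM i0 i1 r.1 i0 * rotM i0 i1 r.2 i1)
      = M (i0, i0) (i0, i0) * (12/25) := by
    rw [Fintype.sum_eq_single ((i0, i0) : Fin d × Fin d) (fun r hr => by
      have hz : M (i0, i0) r = 0 := comm_zero hM (i0, i0) r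
        (fun hh => hr (Prod.ext hh.1 hh.2)) (fun hh => hr (Prod.ext hh.1 hh.2))
      rw [hz, zero_mul])]
    have h1 : rotM i0 i1 i0 i0 = 3/5 := by simp [rotM]
    have h2 : rotM i0 i1 i0 i1 = 4/5 := by simp [rotM, h01, h10]
    rw [h1, h2]
    norm_num
  have hprne : ((i0, i1) : Fin d × Fin d) ≠ (i1, i0) := fun hh => h01 (congrArg Prod.fst hh)
  have hR : ∑ r : Fin d × Fin d, (rotM i0 i1 i0 r.1 * rotM i0 i1 i0 r.2) * M r (i0, i1)
      = (M (i0, i1) (i0, i1) + M (i1, i0) (i0, i1)) * (12/25) := by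
    rw [sum_eq_pair ((i0, i1) : Fin d × Fin d) ((i1, i0) : Fin d × Fin d) hprne _ (fun r hr1 hr2 => by
      have hz : M r (i0, i1) = 0 := comm_zero hM r (i0, i1)
        (fun hh => hr1 (Prod.ext hh.1.symm hh.2.symm)) (fun hh => hr2 (Prod.ext hh.2.symm hh.1.symm))
      rw [hz, mul_zero])]
    have h1 : rotM i0 i1 i0 i0 = 3/5 := by simp [rotM]
    have h2 : rotM i0 i1 i0 i1 = 4/5 := by simp [rotM, h01, h10]
    rw [h1, h2]
    ring
  rw [hL, hR] at hrot
  have hb' : M (i1, i0) (i0, i1) = M (i0, i1) (i1, i0) := hb i1 i0 h10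
  rw [hb'] at hrot
  have hcab : M (i0, i0) (i0, i0) = M (i0, i1) (i0, i1) + M (i0, i1) (i1, i0) :=
    mul_right_cancel₀ (by norm_num) hrot
  -- assemble
  ext p q
  obtain ⟨p1, p2⟩ := p
  obtain ⟨q1, q2⟩ := q
  simp only [Matrix.add_apply, Matrix.smul_apply, Matrix.one_apply, swapOp, Matrix.of_apply,
    smul_eq_mul, Prod.mk.injEq]
  by_cases hpq : q1 = p1 ∧ q2 = p2
  · obtain ⟨hq1, hq2⟩ := hpq
    subst hq1; subst hq2
    by_cases hdiag : q2 = q1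
    · subst hdiag
      simp only [and_self, if_true]
      rw [hc q2, hcab]
      ring
    · rw [ha q1 q2 (Ne.symm hdiag)]
      simp [hdiag, Ne.symm hdiag]
  · by_cases hswap : q1 = p2 ∧ q2 = p1
    · obtain ⟨hq1, hq2⟩ := hswap
      subst hq1; subst hq2
      have hne : q2 ≠ q1 := fun hh => hpq ⟨by rw [hh], by rw [hh]⟩
      rw [hb q2 q1 hne]
      simp [hne, Ne.symm hne]
    · rw [comm_zero hM (p1, p2) (q1, q2) hpq hswap]
      have h1 : ¬(p1 = q1 ∧ p2 = q2) := fun hh => hpq ⟨hh.1.symm, hh.2.symm⟩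
      simp [h1, hswap]

end Helpers


/-! ### Trace identities -/

lemma swapOp_conjT : (swapOp d)ᴴ = swapOp d := by
  ext p q
  simp [swapOp, Matrix.conjTranspose_apply, and_comm, eq_comm]

lemma trace_twirlFn (ρ : Matrix (Fin d × Fin d) (Fin d × Fin d) ℂ) (U : uG d) :
    (twirlFn ρ U).trace = ρ.trace := by
  unfold twirlFn
  rw [Matrix.trace_mul_cycle, kron_conjT_mul_self U, one_mul]

lemma trace_twirlFn_swap (ρ : Matrix (Fin d × Fin d) (Fin d × Fin d) ℂ) (U : uG d) :
    (twirlFn ρ U * swapOp d).trace = (ρ * swapOp d).trace := by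
  unfold twirlFn
  have hAF : ((U : Matrix (Fin d) (Fin d) ℂ) ⊗ₖ (U : Matrix (Fin d) (Fin d) ℂ))ᴴ * swapOp d
      = swapOp d * ((U : Matrix (Fin d) (Fin d) ℂ) ⊗ₖ (U : Matrix (Fin d) (Fin d) ℂ))ᴴ := by
    have h := congrArg Matrix.conjTranspose
      (swapOp_mul_kron (U : Matrix (Fin d) (Fin d) ℂ) (U : Matrix (Fin d) (Fin d) ℂ))
    rw [Matrix.conjTranspose_mul, Matrix.conjTranspose_mul, swapOp_conjT] at h
    exact h
  calc (((U : Matrix (Fin d) (Fin d) ℂ) ⊗ₖ (U : Matrix (Fin d) (Fin d) ℂ)) * ρ *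
          ((U : Matrix (Fin d) (Fin d) ℂ) ⊗ₖ (U : Matrix (Fin d) (Fin d) ℂ))ᴴ * swapOp d).trace
      = (((U : Matrix (Fin d) (Fin d) ℂ) ⊗ₖ (U : Matrix (Fin d) (Fin d) ℂ)) * (ρ * swapOp d) *
          ((U : Matrix (Fin d) (Fin d) ℂ) ⊗ₖ (U : Matrix (Fin d) (Fin d) ℂ))ᴴ).trace := by
        rw [mul_assoc _ _ (swapOp d), hAF]
        noncomm_ring
    _ = (ρ * swapOp d).trace := by
        rw [Matrix.trace_mul_cycle, kron_conjT_mul_self U, one_mul]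

/-- Twirling over the Haar probability measure on `U(d)`:
`∫ (U⊗U) ρ (U⊗U)† dU = Tr(ρ Π_sym)·(2/(d(d+1))) Π_sym + Tr(ρ Π_anti)·(2/(d(d−1))) Π_anti`,
the integral being taken entrywise. The Haar probability measure is characterized as a
left-invariant probability measure on the compact group `U(d)`. -/
theorem twirl_formula {d : ℕ} (hd : 2 ≤ d)
    (μ : Measure (Matrix.unitaryGroup (Fin d) ℂ)) [IsProbabilityMeasure μ]
    (hinv : ∀ V : Matrix.unitaryGroup (Fin d) ℂ,
      MeasurePreserving (fun W => V * W) μ μ)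
    (ρ : Matrix (Fin d × Fin d) (Fin d × Fin d) ℂ) :
    (Matrix.of fun p q => ∫ U : Matrix.unitaryGroup (Fin d) ℂ,
        (((U : Matrix (Fin d) (Fin d) ℂ) ⊗ₖ (U : Matrix (Fin d) (Fin d) ℂ)) * ρ *
          ((U : Matrix (Fin d) (Fin d) ℂ) ⊗ₖ (U : Matrix (Fin d) (Fin d) ℂ))ᴴ) p q ∂μ) =
      (ρ * PiSym d).trace • ((2 / ((d : ℂ) * ((d : ℂ) + 1))) • PiSym d) +
      (ρ * PiAnti d).trace • ((2 / ((d : ℂ) * ((d : ℂ) - 1))) • PiAnti d) := by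
  show intM μ (twirlFn ρ) = _
  set i0 : Fin d := ⟨0, by omega⟩ with hi0_def
  set i1 : Fin d := ⟨1, by omega⟩ with hi1_def
  have h01 : i0 ≠ i1 := fun h => by simpa [hi0_def, hi1_def] using congrArg Fin.val h
  have hstruct := comm_structure i0 i1 h01 (twirl_comm μ hinv ρ)
  set α := intM μ (twirlFn ρ) (i0, i1) (i0, i1) with hα_def
  set β := intM μ (twirlFn ρ) (i0, i1) (i1, i0) with hβ_def
  set D : ℂ := (d : ℂ) with hD_def
  have hD0 : D ≠ 0 := Nat.cast_ne_zero.mpr (by omega)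
  have hD1 : D + 1 ≠ 0 := by
    have : ((d + 1 : ℕ) : ℂ) ≠ 0 := Nat.cast_ne_zero.mpr (by omega)
    rwa [Nat.cast_add, Nat.cast_one] at this
  have hDm1 : D - 1 ≠ 0 := sub_ne_zero.mpr (Nat.cast_ne_one.mpr (by omega))
  -- trace identities
  have hS : ρ.trace = α * (D * D) + β * D := by
    have h1 : (intM μ (twirlFn ρ)).trace = ρ.trace := by
      rw [trace_intM μ _ (twirlFn_integrable μ ρ)]
      rw [integral_congr_ae (Filter.Eventually.of_forall fun U => trace_twirlFn ρ U)]
      simp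
    rw [← h1, hstruct]
    simp [Matrix.trace_add, Matrix.trace_smul, Matrix.trace_one, trace_swapOp, smul_eq_mul, hD_def]
  have hT : (ρ * swapOp d).trace = α * D + β * (D * D) := by
    have h0 := mul_intM_mul μ 1 (swapOp d) (twirlFn ρ) (twirlFn_integrable μ ρ)
    simp only [one_mul] at h0
    have hint : ∀ p q, Integrable (fun U => (twirlFn ρ U * swapOp d) p q) μ := by
      intro p q
      have : (fun U => (twirlFn ρ U * swapOp d) p q)
          = fun U => twirlFn ρ U p (q.2, q.1) := funext fun U => mul_swapOp_apply _ _ _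
      rw [this]
      exact twirlFn_integrable μ ρ p (q.2, q.1)
    have h1 : (intM μ (twirlFn ρ) * swapOp d).trace = (ρ * swapOp d).trace := by
      rw [h0, trace_intM μ _ hint]
      rw [integral_congr_ae (Filter.Eventually.of_forall fun U => trace_twirlFn_swap ρ U)]
      simp
    rw [← h1, hstruct]
    rw [add_mul, Matrix.smul_mul, Matrix.smul_mul, one_mul, swapOp_mul_swapOp]
    simp [Matrix.trace_add, Matrix.trace_smul, Matrix.trace_one, trace_swapOp, smul_eq_mul, hD_def]
  -- traces against the projectors
  have hTrSym : (ρ * PiSym d).trace = (2 : ℂ)⁻¹ * (ρ.trace + (ρ * swapOp d).trace) := by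
    rw [PiSym, Matrix.mul_smul, Matrix.trace_smul, Matrix.mul_add, mul_one, Matrix.trace_add]
    simp [smul_eq_mul]
  have hTrAnti : (ρ * PiAnti d).trace = (2 : ℂ)⁻¹ * (ρ.trace - (ρ * swapOp d).trace) := by
    rw [PiAnti, Matrix.mul_smul, Matrix.trace_smul, Matrix.mul_sub, mul_one, Matrix.trace_sub]
    simp [smul_eq_mul]
  rw [hstruct]
  have e1 : (ρ * PiSym d).trace • ((2 / (D * (D + 1))) • PiSym d)
      = ((α + β) * (2 : ℂ)⁻¹) • (1 + swapOp d) := by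
    rw [hTrSym, hS, hT, PiSym, smul_smul, smul_smul]
    congr 1
    field_simp
    ring
  have e2 : (ρ * PiAnti d).trace • ((2 / (D * (D - 1))) • PiAnti d)
      = ((α - β) * (2 : ℂ)⁻¹) • (1 - swapOp d) := by
    rw [hTrAnti, hS, hT, PiAnti, smul_smul, smul_smul]
    congr 1
    field_simp
    ring
  rw [e1, e2]
  ext p q
  simp only [Matrix.add_apply, Matrix.sub_apply, Matrix.smul_apply, smul_eq_mul]
  ring
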